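/- Equivariance error bound for the regular nonlinearity (main theorem): for every δ with 0 ≤ δ ≤ 1 and every output band limit B' ≥ 1, the total ℓ¹ equivariance error satisfies |z₀^{FT} − z₀^{TF}| + Σ_{m=1}^{B'} ( |z_α^{FT}(m) − z_α^{TF}(m)| + |z_β^{FT}(m) − z_β^{TF}(m)| ) ≤ (4π L_f / N) · ( (2B' + 1/2) · ‖∂x‖₁ + B'(B' + 1) · ‖x‖₁ ). -/

import Mathlib

open Finset Real

private lemma half_sin_le (a b : ℝ) : |Real.sin ((a - b) / 2)| ≤ |a - b| / 2 := by
  have h := Real.abs_sin_le_abs (x := (a - b) / 2)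
  rwa [abs_div, abs_two] at h

private lemma cos_lip' (a b : ℝ) : |Real.cos a - Real.cos b| ≤ |a - b| := by
  rw [Real.cos_sub_cos]
  calc |-2 * Real.sin ((a + b) / 2) * Real.sin ((a - b) / 2)|
      = 2 * |Real.sin ((a + b) / 2)| * |Real.sin ((a - b) / 2)| := by
        rw [abs_mul, abs_mul]; norm_num
    _ ≤ 2 * 1 * (|a - b| / 2) := by
        gcongr
        · exact Real.abs_sin_le_one _
        · exact half_sin_le a b
    _ = |a - b| := by ring

private lemma sin_lip' (a b : ℝ) : |Real.sin a - Real.sin b| ≤ |a - b| := by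
  rw [Real.sin_sub_sin]
  calc |2 * Real.sin ((a - b) / 2) * Real.cos ((a + b) / 2)|
      = 2 * |Real.sin ((a - b) / 2)| * |Real.cos ((a + b) / 2)| := by
        rw [abs_mul, abs_mul]; norm_num
    _ ≤ 2 * (|a - b| / 2) * 1 := by
        gcongr
        · exact half_sin_le a b
        · exact Real.abs_cos_le_one _
    _ = |a - b| := by ring

private lemma gauss_cast (n : ℕ) :
    ∑ m ∈ Finset.Icc 1 n, (m : ℝ) = n * (n + 1) / 2 := by
  induction n with
  | zero => simp
  | succ k ih =>
      rw [Finset.sum_Icc_succ_top (by omega : 1 ≤ k + 1), ih]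
      push_cast; ring

/-- total ℓ¹ equivariance error bound for the regular
nonlinearity (main theorem). -/
theorem regular_nonlinearity_equivariance_error_bound
    (N B : ℕ) (hN : 1 ≤ N) (hB : 1 ≤ B)
    (x0 : ℝ) (xa xb : ℕ → ℝ) (x : ℝ → ℝ)
    (hx : ∀ t : ℝ, x t = x0 + ∑ m ∈ Finset.Icc 1 B,
      (xa m * Real.cos (2 * Real.pi * m * t / N)
        + xb m * Real.sin (2 * Real.pi * m * t / N)))
    (f : ℝ → ℝ) (Lf : ℝ) (hLf : 0 ≤ Lf)
    (hf : ∀ a b : ℝ, |f a - f b| ≤ Lf * |a - b|) (hf0 : f 0 = 0)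
    (y : ℝ → ℝ) (hy : ∀ t : ℝ, y t = f (x t)) :
    ∀ (δ : ℝ), 0 ≤ δ → δ ≤ 1 → ∀ B' : ℕ, 1 ≤ B' →
      |(1 / (N : ℝ)) * (∑ t ∈ Finset.range N, y ((t : ℝ) + δ))
          - (1 / (N : ℝ)) * (∑ t ∈ Finset.range N, y (t : ℝ))|
        + ∑ m ∈ Finset.Icc 1 B',
            (|(2 / (N : ℝ)) * (∑ t ∈ Finset.range N,
                  Real.cos (2 * Real.pi * m * t / N) * y ((t : ℝ) + δ))
              - (2 / (N : ℝ)) * (∑ t ∈ Finset.range N,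
                  Real.cos (2 * Real.pi * m * ((t : ℝ) - δ) / N) * y t)|
            + |(2 / (N : ℝ)) * (∑ t ∈ Finset.range N,
                  Real.sin (2 * Real.pi * m * t / N) * y ((t : ℝ) + δ))
              - (2 / (N : ℝ)) * (∑ t ∈ Finset.range N,
                  Real.sin (2 * Real.pi * m * ((t : ℝ) - δ) / N) * y t)|)
      ≤ (4 * Real.pi * Lf / N) *
          (((2 * (B' : ℝ) + 1 / 2) *
              ∑ k ∈ Finset.Icc 1 B, (k : ℝ) * (|xa k| + |xb k|))
            + (B' : ℝ) * ((B' : ℝ) + 1) *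
                (|x0| + ∑ k ∈ Finset.Icc 1 B, (|xa k| + |xb k|))) := by
  intro δ hδ0 hδ1 B' hB'
  have hNpos : (0:ℝ) < N := by exact_mod_cast hN
  have hNne : (N:ℝ) ≠ 0 := ne_of_gt hNpos
  have hπ : (0:ℝ) < Real.pi := Real.pi_pos
  set Dx : ℝ := ∑ k ∈ Finset.Icc 1 B, (k:ℝ) * (|xa k| + |xb k|) with hDxdef
  set Sx : ℝ := |x0| + ∑ k ∈ Finset.Icc 1 B, (|xa k| + |xb k|) with hSxdef
  have hDx0 : 0 ≤ Dx :=
    Finset.sum_nonneg fun k _ => by positivity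
  have hSx0 : 0 ≤ Sx :=
    add_nonneg (abs_nonneg _) (Finset.sum_nonneg fun k _ => by positivity)
  -- increment bound on x
  have hxinc : ∀ t : ℝ, |x (t + δ) - x t| ≤ 2 * Real.pi / N * Dx := by
    intro t
    rw [hx (t + δ), hx t, add_sub_add_left_eq_sub, ← Finset.sum_sub_distrib]
    have hre : ∀ m ∈ Finset.Icc 1 B,
        (xa m * Real.cos (2 * Real.pi * m * (t + δ) / N)
            + xb m * Real.sin (2 * Real.pi * m * (t + δ) / N))
          - (xa m * Real.cos (2 * Real.pi * m * t / N)
            + xb m * Real.sin (2 * Real.pi * m * t / N))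
        = xa m * (Real.cos (2 * Real.pi * m * (t + δ) / N)
              - Real.cos (2 * Real.pi * m * t / N))
          + xb m * (Real.sin (2 * Real.pi * m * (t + δ) / N)
              - Real.sin (2 * Real.pi * m * t / N)) := fun m _ => by ring
    rw [Finset.sum_congr rfl hre]
    refine (Finset.abs_sum_le_sum_abs _ _).trans ?_
    have hterm : ∀ m ∈ Finset.Icc 1 B,
        |xa m * (Real.cos (2 * Real.pi * m * (t + δ) / N)
              - Real.cos (2 * Real.pi * m * t / N))
          + xb m * (Real.sin (2 * Real.pi * m * (t + δ) / N)
              - Real.sin (2 * Real.pi * m * t / N))|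
        ≤ 2 * Real.pi / N * ((m:ℝ) * (|xa m| + |xb m|)) := by
      intro m _
      have hAC : 2 * Real.pi * m * (t + δ) / N - 2 * Real.pi * m * t / N
          = 2 * Real.pi * m * δ / N := by ring
      have hd : |2 * Real.pi * m * (t + δ) / N - 2 * Real.pi * m * t / N|
          ≤ 2 * Real.pi * (m:ℝ) / N := by
        rw [hAC, abs_of_nonneg (by positivity)]
        calc 2 * Real.pi * (m:ℝ) * δ / N = (2 * Real.pi * (m:ℝ) / N) * δ := by ring
          _ ≤ (2 * Real.pi * (m:ℝ) / N) * 1 :=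
              mul_le_mul_of_nonneg_left hδ1 (by positivity)
          _ = 2 * Real.pi * (m:ℝ) / N := by ring
      calc |xa m * (Real.cos (2 * Real.pi * m * (t + δ) / N)
              - Real.cos (2 * Real.pi * m * t / N))
          + xb m * (Real.sin (2 * Real.pi * m * (t + δ) / N)
              - Real.sin (2 * Real.pi * m * t / N))|
          ≤ |xa m| * |Real.cos (2 * Real.pi * m * (t + δ) / N)
              - Real.cos (2 * Real.pi * m * t / N)|
            + |xb m| * |Real.sin (2 * Real.pi * m * (t + δ) / N)
              - Real.sin (2 * Real.pi * m * t / N)| := by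
            refine (abs_add_le _ _).trans ?_
            rw [abs_mul, abs_mul]
        _ ≤ |xa m| * (2 * Real.pi * (m:ℝ) / N) + |xb m| * (2 * Real.pi * (m:ℝ) / N) := by
            gcongr
            · exact (cos_lip' _ _).trans hd
            · exact (sin_lip' _ _).trans hd
        _ = 2 * Real.pi / N * ((m:ℝ) * (|xa m| + |xb m|)) := by ring
    refine (Finset.sum_le_sum hterm).trans ?_
    rw [← Finset.mul_sum]
  -- bound on |x t|
  have hxbnd : ∀ t : ℝ, |x t| ≤ Sx := by
    intro t
    rw [hx t]
    refine (abs_add_le _ _).trans ?_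
    rw [hSxdef]
    gcongr
    refine (Finset.abs_sum_le_sum_abs _ _).trans (Finset.sum_le_sum fun m _ => ?_)
    calc |xa m * Real.cos (2 * Real.pi * m * t / N)
          + xb m * Real.sin (2 * Real.pi * m * t / N)|
        ≤ |xa m| * |Real.cos (2 * Real.pi * m * t / N)|
          + |xb m| * |Real.sin (2 * Real.pi * m * t / N)| := by
          refine (abs_add_le _ _).trans ?_
          rw [abs_mul, abs_mul]
      _ ≤ |xa m| * 1 + |xb m| * 1 := by
          gcongr
          · exact Real.abs_cos_le_one _
          · exact Real.abs_sin_le_one _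
      _ = |xa m| + |xb m| := by ring
  -- bounds on y
  have hybnd : ∀ t : ℝ, |y t| ≤ Lf * Sx := by
    intro t
    rw [hy t]
    calc |f (x t)| = |f (x t) - f 0| := by rw [hf0, sub_zero]
      _ ≤ Lf * |x t - 0| := hf _ _
      _ = Lf * |x t| := by rw [sub_zero]
      _ ≤ Lf * Sx := mul_le_mul_of_nonneg_left (hxbnd t) hLf
  have hyinc : ∀ t : ℝ, |y (t + δ) - y t| ≤ Lf * (2 * Real.pi / N * Dx) := by
    intro t
    rw [hy (t + δ), hy t]
    exact (hf _ _).trans (mul_le_mul_of_nonneg_left (hxinc t) hLf)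
  -- key per-frequency bound
  have key : ∀ g : ℝ → ℝ, (∀ a, |g a| ≤ 1) → (∀ a b, |g a - g b| ≤ |a - b|) →
      ∀ m : ℕ, m ∈ Finset.Icc 1 B' →
      |(2 / (N : ℝ)) * (∑ t ∈ Finset.range N, g (2 * Real.pi * m * t / N) * y ((t : ℝ) + δ))
        - (2 / (N : ℝ)) * (∑ t ∈ Finset.range N, g (2 * Real.pi * m * ((t : ℝ) - δ) / N) * y t)|
      ≤ 4 * Real.pi * Lf / N * (Dx + (m:ℝ) * Sx) := by
    intro g hg1 hgl m _
    rw [← mul_sub, ← Finset.sum_sub_distrib, abs_mul,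
      abs_of_nonneg (by positivity : (0:ℝ) ≤ 2 / (N:ℝ))]
    have hterm : ∀ t ∈ Finset.range N,
        |g (2 * Real.pi * m * t / N) * y ((t : ℝ) + δ)
          - g (2 * Real.pi * m * ((t : ℝ) - δ) / N) * y t|
        ≤ Lf * (2 * Real.pi / N * Dx) + (2 * Real.pi * (m:ℝ) / N) * (Lf * Sx) := by
      intro t _
      have hdecomp : g (2 * Real.pi * m * t / N) * y ((t : ℝ) + δ)
            - g (2 * Real.pi * m * ((t : ℝ) - δ) / N) * y t
          = g (2 * Real.pi * m * t / N) * (y ((t : ℝ) + δ) - y t)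
            + (g (2 * Real.pi * m * t / N)
              - g (2 * Real.pi * m * ((t : ℝ) - δ) / N)) * y t := by ring
      have hAC : 2 * Real.pi * (m:ℝ) * t / N - 2 * Real.pi * m * ((t : ℝ) - δ) / N
          = 2 * Real.pi * m * δ / N := by ring
      have hgd : |g (2 * Real.pi * m * t / N) - g (2 * Real.pi * m * ((t : ℝ) - δ) / N)|
          ≤ 2 * Real.pi * (m:ℝ) / N := by
        refine (hgl _ _).trans ?_
        rw [hAC, abs_of_nonneg (by positivity)]
        calc 2 * Real.pi * (m:ℝ) * δ / N = (2 * Real.pi * (m:ℝ) / N) * δ := by ring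
          _ ≤ (2 * Real.pi * (m:ℝ) / N) * 1 :=
              mul_le_mul_of_nonneg_left hδ1 (by positivity)
          _ = 2 * Real.pi * (m:ℝ) / N := by ring
      rw [hdecomp]
      calc |g (2 * Real.pi * m * t / N) * (y ((t : ℝ) + δ) - y t)
            + (g (2 * Real.pi * m * t / N)
              - g (2 * Real.pi * m * ((t : ℝ) - δ) / N)) * y t|
          ≤ |g (2 * Real.pi * m * t / N)| * |y ((t : ℝ) + δ) - y t|
            + |g (2 * Real.pi * m * t / N)
              - g (2 * Real.pi * m * ((t : ℝ) - δ) / N)| * |y t| := by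
            refine (abs_add_le _ _).trans ?_
            rw [abs_mul, abs_mul]
        _ ≤ 1 * (Lf * (2 * Real.pi / N * Dx))
            + (2 * Real.pi * (m:ℝ) / N) * (Lf * Sx) := by
            gcongr
            · exact hg1 _
            · exact hyinc t
            · exact hybnd t
        _ = Lf * (2 * Real.pi / N * Dx) + (2 * Real.pi * (m:ℝ) / N) * (Lf * Sx) := by
            ring
    calc (2 / (N:ℝ)) * |∑ t ∈ Finset.range N,
            (g (2 * Real.pi * m * t / N) * y ((t : ℝ) + δ)
              - g (2 * Real.pi * m * ((t : ℝ) - δ) / N) * y t)|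
        ≤ (2 / (N:ℝ)) * ∑ t ∈ Finset.range N,
            |g (2 * Real.pi * m * t / N) * y ((t : ℝ) + δ)
              - g (2 * Real.pi * m * ((t : ℝ) - δ) / N) * y t| := by
          gcongr
          exact Finset.abs_sum_le_sum_abs _ _
      _ ≤ (2 / (N:ℝ)) * ∑ t ∈ Finset.range N,
            (Lf * (2 * Real.pi / N * Dx) + (2 * Real.pi * (m:ℝ) / N) * (Lf * Sx)) := by
          gcongr with t ht
          exact hterm t ht
      _ = (2 / (N:ℝ)) * ((N:ℝ) *
            (Lf * (2 * Real.pi / N * Dx) + (2 * Real.pi * (m:ℝ) / N) * (Lf * Sx))) := by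
          rw [Finset.sum_const, Finset.card_range, nsmul_eq_mul]
      _ = 4 * Real.pi * Lf / N * (Dx + (m:ℝ) * Sx) := by
          field_simp
          ring
  -- zero-mode bound
  have hz0 : |(1 / (N : ℝ)) * (∑ t ∈ Finset.range N, y ((t : ℝ) + δ))
        - (1 / (N : ℝ)) * (∑ t ∈ Finset.range N, y (t : ℝ))|
      ≤ 4 * Real.pi * Lf / N * (Dx / 2) := by
    rw [← mul_sub, ← Finset.sum_sub_distrib, abs_mul,
      abs_of_nonneg (by positivity : (0:ℝ) ≤ 1 / (N:ℝ))]
    calc (1 / (N:ℝ)) * |∑ t ∈ Finset.range N, (y ((t : ℝ) + δ) - y (t : ℝ))|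
        ≤ (1 / (N:ℝ)) * ∑ t ∈ Finset.range N, |y ((t : ℝ) + δ) - y (t : ℝ)| := by
          gcongr
          exact Finset.abs_sum_le_sum_abs _ _
      _ ≤ (1 / (N:ℝ)) * ∑ t ∈ Finset.range N, (Lf * (2 * Real.pi / N * Dx)) := by
          gcongr with t ht
          exact hyinc (t : ℝ)
      _ = (1 / (N:ℝ)) * ((N:ℝ) * (Lf * (2 * Real.pi / N * Dx))) := by
          rw [Finset.sum_const, Finset.card_range, nsmul_eq_mul]
      _ = 4 * Real.pi * Lf / N * (Dx / 2) := by
          field_simp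
          ring
  -- combine
  have hsum : ∑ m ∈ Finset.Icc 1 B',
      (|(2 / (N : ℝ)) * (∑ t ∈ Finset.range N,
            Real.cos (2 * Real.pi * m * t / N) * y ((t : ℝ) + δ))
        - (2 / (N : ℝ)) * (∑ t ∈ Finset.range N,
            Real.cos (2 * Real.pi * m * ((t : ℝ) - δ) / N) * y t)|
      + |(2 / (N : ℝ)) * (∑ t ∈ Finset.range N,
            Real.sin (2 * Real.pi * m * t / N) * y ((t : ℝ) + δ))
        - (2 / (N : ℝ)) * (∑ t ∈ Finset.range N,
            Real.sin (2 * Real.pi * m * ((t : ℝ) - δ) / N) * y t)|)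
      ≤ ∑ m ∈ Finset.Icc 1 B',
          (4 * Real.pi * Lf / N * (Dx + (m:ℝ) * Sx)
            + 4 * Real.pi * Lf / N * (Dx + (m:ℝ) * Sx)) := by
    refine Finset.sum_le_sum fun m hm => add_le_add ?_ ?_
    · exact key Real.cos Real.abs_cos_le_one cos_lip' m hm
    · exact key Real.sin Real.abs_sin_le_one sin_lip' m hm
  have hsum2 : ∑ m ∈ Finset.Icc 1 B',
      (4 * Real.pi * Lf / N * (Dx + (m:ℝ) * Sx)
        + 4 * Real.pi * Lf / N * (Dx + (m:ℝ) * Sx))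
      = 4 * Real.pi * Lf / N *
          (2 * (B':ℝ) * Dx + (B':ℝ) * ((B':ℝ) + 1) * Sx) := by
    have expand : ∀ m ∈ Finset.Icc 1 B',
        4 * Real.pi * Lf / N * (Dx + (m:ℝ) * Sx)
          + 4 * Real.pi * Lf / N * (Dx + (m:ℝ) * Sx)
        = (4 * Real.pi * Lf / N * (2 * Dx))
          + (4 * Real.pi * Lf / N * (2 * Sx)) * (m:ℝ) := fun m _ => by ring
    rw [Finset.sum_congr rfl expand, Finset.sum_add_distrib, Finset.sum_const,
      ← Finset.mul_sum, gauss_cast, Nat.card_Icc, nsmul_eq_mul]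
    push_cast
    ring
  calc |(1 / (N : ℝ)) * (∑ t ∈ Finset.range N, y ((t : ℝ) + δ))
          - (1 / (N : ℝ)) * (∑ t ∈ Finset.range N, y (t : ℝ))|
        + ∑ m ∈ Finset.Icc 1 B',
            (|(2 / (N : ℝ)) * (∑ t ∈ Finset.range N,
                  Real.cos (2 * Real.pi * m * t / N) * y ((t : ℝ) + δ))
              - (2 / (N : ℝ)) * (∑ t ∈ Finset.range N,
                  Real.cos (2 * Real.pi * m * ((t : ℝ) - δ) / N) * y t)|
            + |(2 / (N : ℝ)) * (∑ t ∈ Finset.range N,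
                  Real.sin (2 * Real.pi * m * t / N) * y ((t : ℝ) + δ))
              - (2 / (N : ℝ)) * (∑ t ∈ Finset.range N,
                  Real.sin (2 * Real.pi * m * ((t : ℝ) - δ) / N) * y t)|)
      ≤ 4 * Real.pi * Lf / N * (Dx / 2)
          + 4 * Real.pi * Lf / N *
              (2 * (B':ℝ) * Dx + (B':ℝ) * ((B':ℝ) + 1) * Sx) := by
        rw [← hsum2]
        exact add_le_add hz0 hsum
    _ = (4 * Real.pi * Lf / N) *
          (((2 * (B' : ℝ) + 1 / 2) * Dx) + (B' : ℝ) * ((B' : ℝ) + 1) * Sx) := by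
        ring
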